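/- arXiv:2107.08244 — 2 statements merged into one kernel-verified Lean document; each statement's English description precedes it below -/
import Mathlib

section
/- If M and N are nonzero finite-dimensional representations of Q with the same dimension vector, then Hom_Q(M,N) ≠ 0. -/
open Matrix

noncomputable section

/-- Data of a finite quiver: a vertex set `I` and an arrow set `Ω` with source and target maps. -/
structure QuivData where
  I : Type
  Ω : Type
  s : Ω → I
  t : Ω → I

/-- The Zariski topology on the affine space `σ → ℂ`, generated by the complements
of hypersurfaces. -/
def zariskiTop (σ : Type*) : TopologicalSpace (σ → ℂ) :=
  TopologicalSpace.generateFrom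
    {U | ∃ p : MvPolynomial σ ℂ, U = {x | MvPolynomial.eval x p ≠ 0}}

/-- The dimension of a subset of affine space: the topological Krull dimension for the
(subspace) Zariski topology. -/
def zDim {σ : Type*} (S : Set (σ → ℂ)) : WithBot ℕ∞ :=
  @topologicalKrullDim S (@instTopologicalSpaceSubtype _ _ (zariskiTop σ))

/-- Zariski closure in affine space. -/
def zClosure {σ : Type*} (S : Set (σ → ℂ)) : Set (σ → ℂ) := @closure _ (zariskiTop σ) S

def zIsClosed {σ : Type*} (S : Set (σ → ℂ)) : Prop := @IsClosed _ (zariskiTop σ) S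

def zIsOpen {σ : Type*} (S : Set (σ → ℂ)) : Prop := @IsOpen _ (zariskiTop σ) S

def zIsIrreducible {σ : Type*} (S : Set (σ → ℂ)) : Prop := @IsIrreducible _ (zariskiTop σ) S

namespace QuivData

variable (Q : QuivData)

/-- The space `E_d` of representations of `Q` on the `I`-graded vector space
`⊕ i, (n i → ℂ)`, given as tuples of matrices indexed by the arrows. -/
abbrev RepSpace (n : Q.I → Type) : Type := ∀ h : Q.Ω, Matrix (n (Q.t h)) (n (Q.s h)) ℂ

/-- The coordinates of the representation space. -/
abbrev RepCoord (n : Q.I → Type) : Type := (h : Q.Ω) × (n (Q.t h) × n (Q.s h))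

/-- The (bijective) coordinate chart of the representation space. -/
def toCoord {n : Q.I → Type} (x : Q.RepSpace n) : Q.RepCoord n → ℂ :=
  fun c => x c.1 c.2.1 c.2.2

variable {Q}

/-- Zariski closure inside a representation space. -/
def repClosure {n : Q.I → Type} (S : Set (Q.RepSpace n)) : Set (Q.RepSpace n) :=
  Q.toCoord ⁻¹' zClosure (Q.toCoord '' S)

/-- Dimension of a subset of a representation space. -/
def repDim {n : Q.I → Type} (S : Set (Q.RepSpace n)) : WithBot ℕ∞ := zDim (Q.toCoord '' S)

def repIsClosed {n : Q.I → Type} (S : Set (Q.RepSpace n)) : Prop := zIsClosed (Q.toCoord '' S)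

def repIsOpen {n : Q.I → Type} (S : Set (Q.RepSpace n)) : Prop := zIsOpen (Q.toCoord '' S)

def repIsIrreducible {n : Q.I → Type} (S : Set (Q.RepSpace n)) : Prop :=
  zIsIrreducible (Q.toCoord '' S)

section Group

variable {n : Q.I → Type} [∀ i, Fintype (n i)] [∀ i, DecidableEq (n i)]

/-- The base-change action of `G_d = ∏ i, GL(n i, ℂ)` on the representation space. -/
def act (g : ∀ i, GL (n i) ℂ) (x : Q.RepSpace n) : Q.RepSpace n :=
  fun h => (g (Q.t h) : Matrix (n (Q.t h)) (n (Q.t h)) ℂ) * x h *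
    (((g (Q.s h))⁻¹ : GL (n (Q.s h)) ℂ) : Matrix (n (Q.s h)) (n (Q.s h)) ℂ)

/-- The `G_d`-orbit of a representation; orbits correspond to Kostant partitions
(isomorphism classes). -/
def orbit (x : Q.RepSpace n) : Set (Q.RepSpace n) := {y | ∃ g : ∀ i, GL (n i) ℂ, act g x = y}

/-- The degeneration order on Kostant partitions (given by representatives):
`a ≤ b` iff `𝒪_b ⊆ closure 𝒪_a`. -/
def KPle (a b : Q.RepSpace n) : Prop := orbit b ⊆ repClosure (orbit a)

/-- Strict degeneration order on Kostant partitions (given by representatives). -/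
def KPlt (a b : Q.RepSpace n) : Prop := KPle a b ∧ orbit a ≠ orbit b

/-- Coordinates on the group `∏ i, GL(n i, ℂ)` (matrix entries). -/
def glCoord (g : ∀ i, GL (n i) ℂ) : ((i : Q.I) × (n i × n i)) → ℂ :=
  fun c => (g c.1 : Matrix _ _ ℂ) c.2.1 c.2.2

/-- The matrix of the inverse of a group element. -/
def glInvMat (g : ∀ i, GL (n i) ℂ) (i : Q.I) : Matrix (n i) (n i) ℂ :=
  ((g i)⁻¹ : GL (n i) ℂ)

end Group

section HomExt

variable {n m : Q.I → Type} [∀ i, Fintype (n i)] [∀ i, Fintype (m i)]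

/-- The space `Hom_Q(M_x, M_y)` of morphisms of representations, as a submodule of
`∏ i, Hom(ℂ^{n i}, ℂ^{m i})`. -/
def homSubmodule (x : Q.RepSpace n) (y : Q.RepSpace m) :
    Submodule ℂ (∀ i, Matrix (m i) (n i) ℂ) where
  carrier := {f | ∀ h, f (Q.t h) * x h = y h * f (Q.s h)}
  add_mem' := by
    intro f g hf hg h
    simp only [Pi.add_apply, Matrix.add_mul, Matrix.mul_add, hf h, hg h]
  zero_mem' := by
    intro h
    simp
  smul_mem' := by
    intro c f hf h
    simp only [Pi.smul_apply, Matrix.smul_mul, Matrix.mul_smul, hf h]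

/-- `[M_x, M_y] = dim Hom_Q(M_x, M_y)`. -/
def homDim (x : Q.RepSpace n) (y : Q.RepSpace m) : ℕ :=
  Module.finrank ℂ (homSubmodule x y)

/-- The standard map `∏ i, Hom(ℂ^{n i}, ℂ^{m i}) → ∏ h, Hom(ℂ^{n (s h)}, ℂ^{m (t h)})`
whose kernel is `Hom_Q(M_x, M_y)` and whose cokernel is `Ext¹_Q(M_x, M_y)`. -/
def extLinMap (x : Q.RepSpace n) (y : Q.RepSpace m) :
    (∀ i, Matrix (m i) (n i) ℂ) →ₗ[ℂ] (∀ h : Q.Ω, Matrix (m (Q.t h)) (n (Q.s h)) ℂ) where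
  toFun f := fun h => y h * f (Q.s h) - f (Q.t h) * x h
  map_add' f g := by
    funext h
    simp only [Pi.add_apply, Matrix.mul_add, Matrix.add_mul]
    abel
  map_smul' c f := by
    funext h
    simp only [Pi.smul_apply, Matrix.mul_smul, Matrix.smul_mul, RingHom.id_apply, smul_sub]

/-- `[M_x, M_y]¹ = dim Ext¹_Q(M_x, M_y)`. -/
def ext1Dim (x : Q.RepSpace n) (y : Q.RepSpace m) : ℕ :=
  Module.finrank ℂ (∀ h : Q.Ω, Matrix (m (Q.t h)) (n (Q.s h)) ℂ)
    - Module.finrank ℂ (LinearMap.range (extLinMap x y))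

end HomExt

section Sub

variable {n m na nb ng : Q.I → Type} [∀ i, Fintype (n i)] [∀ i, Fintype (m i)]
  [∀ i, Fintype (na i)] [∀ i, Fintype (nb i)] [∀ i, Fintype (ng i)]

/-- `W` is an `I`-graded subspace stable under the representation `x`. -/
def IsSubrep (x : Q.RepSpace n) (W : ∀ i, Submodule ℂ (n i → ℂ)) : Prop :=
  ∀ h, (W (Q.s h)).map (Matrix.mulVecLin (x h)) ≤ W (Q.t h)

/-- The restriction of `x` to the stable graded subspace `W` is isomorphic to the
representation `y`. -/
def RestrictIso (x : Q.RepSpace n) (W : ∀ i, Submodule ℂ (n i → ℂ))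
    (y : Q.RepSpace m) : Prop :=
  ∃ f : ∀ i, ((m i → ℂ) →ₗ[ℂ] (n i → ℂ)),
    (∀ i, Function.Injective (f i)) ∧ (∀ i, LinearMap.range (f i) = W i) ∧
    (∀ h, (Matrix.mulVecLin (x h)).comp (f (Q.s h)) = (f (Q.t h)).comp (Matrix.mulVecLin (y h)))

/-- The representation induced by `x` on the quotient by the stable graded subspace `W`
is isomorphic to the representation `z`. -/
def QuotIso (x : Q.RepSpace n) (W : ∀ i, Submodule ℂ (n i → ℂ))
    (z : Q.RepSpace m) : Prop :=
  ∃ u : ∀ i, ((n i → ℂ) →ₗ[ℂ] (m i → ℂ)),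
    (∀ i, Function.Surjective (u i)) ∧ (∀ i, LinearMap.ker (u i) = W i) ∧
    (∀ h, (u (Q.t h)).comp (Matrix.mulVecLin (x h)) = (Matrix.mulVecLin (z h)).comp (u (Q.s h)))

/-- A short exact sequence of representations `0 → M_y → M_x → M_z → 0`. -/
def ShortExact (y : Q.RepSpace nb) (x : Q.RepSpace ng) (z : Q.RepSpace na) : Prop :=
  ∃ (f : ∀ i, ((nb i → ℂ) →ₗ[ℂ] (ng i → ℂ))) (u : ∀ i, ((ng i → ℂ) →ₗ[ℂ] (na i → ℂ))),
    (∀ i, Function.Injective (f i)) ∧ (∀ i, Function.Surjective (u i)) ∧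
    (∀ i, LinearMap.ker (u i) = LinearMap.range (f i)) ∧
    (∀ h, (Matrix.mulVecLin (x h)).comp (f (Q.s h)) = (f (Q.t h)).comp (Matrix.mulVecLin (y h))) ∧
    (∀ h, (u (Q.t h)).comp (Matrix.mulVecLin (x h)) = (Matrix.mulVecLin (z h)).comp (u (Q.s h)))

/-- `e` is a generic extension `M_z ∗ M_y` of `M_z` by `M_y`: it is a middle term of a short
exact sequence `0 → M_y → e → M_z → 0` minimizing `dim Ext¹(e, e)`. -/
def IsGenericExt (y : Q.RepSpace nb) (z : Q.RepSpace na) (e : Q.RepSpace ng) : Prop :=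
  ShortExact y e z ∧
    ∀ e' : Q.RepSpace ng, ShortExact y e' z → ext1Dim e e ≤ ext1Dim e' e'

/-- `(z, y)` (that is, `(μ, ν)`) is a generic pair of `x` (that is, `λ`): there is a short
exact sequence `0 → M_y → M_x → M_z → 0`, no `y' < y` fits in such a sequence with quotient
`M_z`, and no `z' < z` fits in such a sequence with submodule `M_y`. -/
def GenericPair [∀ i, DecidableEq (na i)] [∀ i, DecidableEq (nb i)]
    (x : Q.RepSpace ng) (z : Q.RepSpace na) (y : Q.RepSpace nb) : Prop :=
  ShortExact y x z ∧
    (∀ y' : Q.RepSpace nb, ShortExact y' x z → ¬ KPlt y' y) ∧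
    (∀ z' : Q.RepSpace na, ShortExact y x z' → ¬ KPlt z' z)

end Sub

/-- `Q` is of Dynkin type: its Tits form is positive definite. -/
def IsDynkin (Q : QuivData) [Fintype Q.I] [Fintype Q.Ω] : Prop :=
  ∀ d : Q.I → ℚ, d ≠ 0 → 0 < (∑ i, d i * d i) - ∑ h : Q.Ω, d (Q.s h) * d (Q.t h)

/-- The Euler form `⟨α, β⟩ = ∑ i, α i * β i - ∑ h, α (s h) * β (t h)`. -/
def euler (Q : QuivData) [Fintype Q.I] [Fintype Q.Ω] (a b : Q.I → ℕ) : ℤ :=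
  (∑ i, (a i : ℤ) * b i) - ∑ h : Q.Ω, (a (Q.s h) : ℤ) * b (Q.t h)

section Blocks

variable (Q : QuivData) (α β : Q.I → ℕ)

/-- The `I`-graded space of graded dimension `γ = α + β`, decomposed as `V = W ⊕ U` with
`dim W = β` (the first block) and `dim U = α`. -/
abbrev nGam : Q.I → Type := fun i => Fin (β i) ⊕ Fin (α i)

/-- `F_{β,γ}`: the representations preserving the standard graded subspace `W`
(block lower-left zero). -/
def Fsub : Set (Q.RepSpace (nGam Q α β)) := {x | ∀ h, (x h).toBlocks₂₁ = 0}

/-- The restriction to `W` of a representation in `F_{β,γ}` (upper-left block). -/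
def subBlock (x : Q.RepSpace (nGam Q α β)) : Q.RepSpace (fun i => Fin (β i)) :=
  fun h => (x h).toBlocks₁₁

/-- The representation induced on `V/W` by a representation in `F_{β,γ}`
(lower-right block). -/
def quotBlock (x : Q.RepSpace (nGam Q α β)) : Q.RepSpace (fun i => Fin (α i)) :=
  fun h => (x h).toBlocks₂₂

/-- The block representation `[[y, u], [0, z]]` of `F_{β,γ}`. -/
def blockRep (y : Q.RepSpace (fun i => Fin (β i)))
    (u : ∀ h : Q.Ω, Matrix (Fin (β (Q.t h))) (Fin (α (Q.s h))) ℂ)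
    (z : Q.RepSpace (fun i => Fin (α i))) : Q.RepSpace (nGam Q α β) :=
  fun h => Matrix.fromBlocks (y h) (u h) 0 (z h)

/-- The direct sum `M_z ⊕ M_y` realized in block form. -/
def dsum (z : Q.RepSpace (fun i => Fin (α i))) (y : Q.RepSpace (fun i => Fin (β i))) :
    Q.RepSpace (nGam Q α β) :=
  blockRep Q α β y 0 z

/-- `κ_λ⁻¹(M_z, M_y)`: the fiber of `κ : closure(𝒪_λ) ∩ F_{β,γ} → E_α × E_β` over `(z, y)`. -/
def kappaFiber (xl : Q.RepSpace (nGam Q α β)) (z : Q.RepSpace (fun i => Fin (α i)))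
    (y : Q.RepSpace (fun i => Fin (β i))) : Set (Q.RepSpace (nGam Q α β)) :=
  {x | x ∈ repClosure (orbit xl) ∧ x ∈ Fsub Q α β ∧ quotBlock Q α β x = z ∧ subBlock Q α β x = y}

/-- The standard graded subspace `W` (first block) of `V`. -/
def Wstd (i : Q.I) : Submodule ℂ ((Fin (β i) ⊕ Fin (α i)) → ℂ) where
  carrier := {v | ∀ j, v (Sum.inr j) = 0}
  add_mem' := by
    intro v w hv hw j
    simp [hv j, hw j]
  zero_mem' := by
    intro j
    rfl
  smul_mem' := by
    intro c v hv j
    simp [hv j]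

/-- The parabolic subgroup `P_{β,γ} = {g ∈ G_γ : g W = W}`. -/
def Psub : Set (∀ i, GL (Fin (β i) ⊕ Fin (α i)) ℂ) :=
  {g | ∀ i, (Wstd Q α β i).map (Matrix.mulVecLin ((g i : Matrix _ _ ℂ))) = Wstd Q α β i}

/-- Coordinates on `E_α × E_β`, defining its Zariski topology. -/
def prodCoord {na nb : Q.I → Type} (p : Q.RepSpace na × Q.RepSpace nb) :
    (Q.RepCoord na ⊕ Q.RepCoord nb) → ℂ :=
  Sum.elim (Q.toCoord p.1) (Q.toCoord p.2)

end Blocks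

end QuivData

namespace QuivData

/-- If `M` and `N` are nonzero finite-dimensional representations of a Dynkin
quiver `Q` with the same dimension vector, then `Hom_Q(M,N) ≠ 0`. -/
theorem statement7 (Q : QuivData) [Fintype Q.I] [Fintype Q.Ω] (hQ : IsDynkin Q)
    (d : Q.I → ℕ) (hd : ∃ i, 0 < d i)
    (x y : Q.RepSpace (fun i => Fin (d i))) :
    homSubmodule x y ≠ ⊥ := by
  classical
  -- homSubmodule x y is the kernel of extLinMap x y
  have hker : homSubmodule x y = LinearMap.ker (extLinMap x y) := by
    ext f
    constructor
    · intro hf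
      simp only [LinearMap.mem_ker]
      funext h
      simp [extLinMap, hf h]
    · intro hf h
      have := congrFun hf h
      simp only [extLinMap, LinearMap.coe_mk, AddHom.coe_mk] at this
      have := sub_eq_zero.mp this
      exact this.symm
  -- dimensions of domain and codomain
  have hdom : Module.finrank ℂ (∀ i, Matrix (Fin (d i)) (Fin (d i)) ℂ)
      = ∑ i, d i * d i := by
    rw [Module.finrank_pi_fintype ℂ]
    simp [Module.finrank_matrix]
  have hcod : Module.finrank ℂ (∀ h : Q.Ω, Matrix (Fin (d (Q.t h))) (Fin (d (Q.s h))) ℂ)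
      = ∑ h : Q.Ω, d (Q.t h) * d (Q.s h) := by
    rw [Module.finrank_pi_fintype ℂ]
    simp [Module.finrank_matrix]
  -- the Tits form inequality over ℕ
  have hdne : (fun i => (d i : ℚ)) ≠ 0 := by
    obtain ⟨i, hi⟩ := hd
    intro h
    have := congrFun h i
    simp at this
    omega
  have hQ' := hQ _ hdne
  have hlt : ∑ h : Q.Ω, d (Q.t h) * d (Q.s h) < ∑ i, d i * d i := by
    have : (∑ h : Q.Ω, (d (Q.s h) : ℚ) * d (Q.t h)) < ∑ i, (d i : ℚ) * d i := by
      linarith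
    have h2 : ((∑ h : Q.Ω, d (Q.s h) * d (Q.t h) : ℕ) : ℚ)
        < ((∑ i, d i * d i : ℕ) : ℚ) := by push_cast; exact this
    have h3 := Nat.cast_lt.mp h2
    calc ∑ h : Q.Ω, d (Q.t h) * d (Q.s h) = ∑ h : Q.Ω, d (Q.s h) * d (Q.t h) := by
          simp [Nat.mul_comm]
      _ < ∑ i, d i * d i := h3
  -- rank-nullity
  have hrn := LinearMap.finrank_range_add_finrank_ker (extLinMap x y)
  have hrle : Module.finrank ℂ (LinearMap.range (extLinMap x y))
      ≤ ∑ h : Q.Ω, d (Q.t h) * d (Q.s h) := by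
    rw [← hcod]
    exact Submodule.finrank_le _
  have hkpos : 0 < Module.finrank ℂ (LinearMap.ker (extLinMap x y)) := by
    rw [hdom] at hrn
    omega
  rw [hker]
  intro hbot
  rw [hbot] at hkpos
  simp at hkpos

end QuivData
end
end

section
/- Let λ = Σ_{i=1}^r [a_i, b_i] be a multisegment with a_1 < a_2 < ⋯ < a_r and b_1 < b_2 < ⋯ < b_r, and let t_1 < t_2 < ⋯ < t_r be integers with a_i ≤ t_i ≤ b_i + 1 for all i. Put μ = Σ_{i=1}^r [a_i, t_i] and ν = Σ_{i=1}^r [t_i + 1, b_i], where empty segments are omitted. Then (μ,ν) is a generic pair of λ. -/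
open Matrix

noncomputable section

namespace QuivData

/-- The equioriented type `A_n` quiver `1 → 2 → ⋯ → n` (vertex `i : Fin n` stands for the
integer `i + 1 ∈ [1, n]`). -/
def Atype (n : ℕ) : QuivData where
  I := Fin n
  Ω := Fin (n - 1)
  s := fun k => ⟨k.1, by have := k.isLt; omega⟩
  t := fun k => ⟨k.1 + 1, by have := k.isLt; omega⟩

instance (n : ℕ) : Fintype (Atype n).I := by unfold Atype; infer_instance
instance (n : ℕ) : Fintype (Atype n).Ω := by unfold Atype; infer_instance

/-- The graded vector space of the representation `M_λ = ⊕_k M[a k, b k]` attached to the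
multisegment `λ = Σ_k [a k, b k]`: the basis at the vertex `i` (i.e. the integer `i + 1`)
consists of the segments containing `i + 1`. -/
def segType (n r : ℕ) (a b : Fin r → ℕ) (i : (Atype n).I) : Type :=
  {k : Fin r // a k ≤ i.1 + 1 ∧ i.1 + 1 ≤ b k}

instance (n r : ℕ) (a b : Fin r → ℕ) (i : (Atype n).I) : Fintype (segType n r a b i) := by
  unfold segType; infer_instance

instance (n r : ℕ) (a b : Fin r → ℕ) (i : (Atype n).I) : DecidableEq (segType n r a b i) := by
  unfold segType; infer_instance

/-- The representation `M_λ = ⊕_k M[a k, b k]` of the multisegment `λ = Σ_k [a k, b k]`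
(empty segments contribute nothing): each segment contributes a string of identity maps. -/
def segRep (n r : ℕ) (a b : Fin r → ℕ) : (Atype n).RepSpace (segType n r a b) :=
  fun h => Matrix.of (fun kt ks => if kt.1 = ks.1 then (1 : ℂ) else 0)

end QuivData

namespace QuivData

section Statement16Aux

instance segTypeFintypeFin (n r : ℕ) (a b : Fin r → ℕ) (i : Fin n) :
    Fintype (segType n r a b i) := by
  unfold segType; infer_instance

instance segTypeDecEqFin (n r : ℕ) (a b : Fin r → ℕ) (i : Fin n) :
    DecidableEq (segType n r a b i) := by
  unfold segType; infer_instance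

open Matrix

variable {n r : ℕ}

/-- Row evaluation of a segment representation. -/
lemma seg_mulVec_apply (a b : Fin r → ℕ) (h : (Atype n).Ω)
    (x : segType n r a b ((Atype n).s h) → ℂ) (kt : segType n r a b ((Atype n).t h)) :
    Matrix.mulVecLin (segRep n r a b h) x kt =
      if hs : a kt.1 ≤ h.1 + 1 ∧ h.1 + 1 ≤ b kt.1 then x ⟨kt.1, hs⟩ else 0 := by
  classical
  have hrw : Matrix.mulVecLin (segRep n r a b h) x kt
      = ∑ ks : segType n r a b ((Atype n).s h),
          (if kt.1 = ks.1 then (1 : ℂ) else 0) * x ks := by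
    rw [Matrix.mulVecLin_apply]
    rfl
  rw [hrw]
  by_cases hs : a kt.1 ≤ h.1 + 1 ∧ h.1 + 1 ≤ b kt.1
  · rw [dif_pos hs]
    refine (Finset.sum_eq_single (⟨kt.1, hs⟩ : segType n r a b ((Atype n).s h)) ?_ ?_).trans ?_
    · intro ks _ hne
      have hne' : kt.1 ≠ ks.1 := fun e => hne (Subtype.ext e.symm)
      rw [if_neg hne', zero_mul]
    · intro habs; exact absurd (Finset.mem_univ _) habs
    · simp
  · rw [dif_neg hs]
    apply Finset.sum_eq_zero
    intro ks _
    have hne' : kt.1 ≠ ks.1 := by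
      intro e
      apply hs
      constructor
      · rw [congrArg a e]; exact ks.2.1
      · rw [congrArg b e]; exact ks.2.2
    rw [if_neg hne', zero_mul]

/-- Column of a segment representation. -/
lemma seg_single_apply (a b : Fin r → ℕ) (h : (Atype n).Ω)
    (ks : segType n r a b ((Atype n).s h)) :
    Matrix.mulVecLin (segRep n r a b h) (Pi.single ks 1) =
      if hk : a ks.1 ≤ h.1 + 2 ∧ h.1 + 2 ≤ b ks.1 then
        Pi.single (⟨ks.1, hk⟩ : segType n r a b ((Atype n).t h)) 1 else 0 := by
  classical
  funext kt
  rw [seg_mulVec_apply]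
  by_cases e : kt.1 = ks.1
  · have hs : a kt.1 ≤ h.1 + 1 ∧ h.1 + 1 ≤ b kt.1 := by
      constructor
      · rw [congrArg a e]; exact ks.2.1
      · rw [congrArg b e]; exact ks.2.2
    have hk : a ks.1 ≤ h.1 + 2 ∧ h.1 + 2 ≤ b ks.1 := by
      constructor
      · rw [← congrArg a e]; exact kt.2.1
      · rw [← congrArg b e]; exact kt.2.2
    rw [dif_pos hs, dif_pos hk]
    have e1 : (⟨kt.1, hs⟩ : segType n r a b ((Atype n).s h)) = ks := Subtype.ext e
    have e2 : kt = (⟨ks.1, hk⟩ : segType n r a b ((Atype n).t h)) := Subtype.ext e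
    rw [e1, e2, Pi.single_eq_same, Pi.single_eq_same]
  · by_cases hs : a kt.1 ≤ h.1 + 1 ∧ h.1 + 1 ≤ b kt.1
    · rw [dif_pos hs]
      have e1 : (⟨kt.1, hs⟩ : segType n r a b ((Atype n).s h)) ≠ ks :=
        fun he => e (congrArg Subtype.val he)
      erw [Pi.single_eq_of_ne e1]
      by_cases hk : a ks.1 ≤ h.1 + 2 ∧ h.1 + 2 ≤ b ks.1
      · erw [dif_pos hk, Pi.single_eq_of_ne (fun he => e (congrArg Subtype.val he))]
      · rw [dif_neg hk]; rfl
    · rw [dif_neg hs]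
      by_cases hk : a ks.1 ≤ h.1 + 2 ∧ h.1 + 2 ≤ b ks.1
      · erw [dif_pos hk, Pi.single_eq_of_ne (fun he => e (congrArg Subtype.val he))]
      · rw [dif_neg hk]; rfl

/-- The entry relation for a morphism between two segment representations. -/
lemma relE {a b a' b' : Fin r → ℕ}
    (u : ∀ i : Fin n, (segType n r a b i → ℂ) →ₗ[ℂ] (segType n r a' b' i → ℂ))
    (hcom : ∀ h : (Atype n).Ω,
      (u ((Atype n).t h)).comp (Matrix.mulVecLin (segRep n r a b h))
        = (Matrix.mulVecLin (segRep n r a' b' h)).comp (u ((Atype n).s h)))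
    (h : (Atype n).Ω) (k : segType n r a b ((Atype n).s h))
    (j : segType n r a' b' ((Atype n).t h)) :
    (if hk : a k.1 ≤ h.1 + 2 ∧ h.1 + 2 ≤ b k.1 then
        u ((Atype n).t h) (Pi.single (⟨k.1, hk⟩ : segType n r a b ((Atype n).t h)) 1) j
      else 0)
    = (if hj : a' j.1 ≤ h.1 + 1 ∧ h.1 + 1 ≤ b' j.1 then
        u ((Atype n).s h) (Pi.single k 1) (⟨j.1, hj⟩ : segType n r a' b' ((Atype n).s h))
      else 0) := by
  classical
  have H : u ((Atype n).t h) (Matrix.mulVecLin (segRep n r a b h) (Pi.single k 1)) j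
      = Matrix.mulVecLin (segRep n r a' b' h) (u ((Atype n).s h) (Pi.single k 1)) j :=
    congrFun (LinearMap.congr_fun (hcom h) (Pi.single k 1)) j
  rw [seg_mulVec_apply] at H
  rw [seg_single_apply] at H
  by_cases hk : a k.1 ≤ h.1 + 2 ∧ h.1 + 2 ≤ b k.1
  · rw [dif_pos hk] at H ⊢
    exact H
  · rw [dif_neg hk] at H ⊢
    erw [map_zero] at H
    exact H

/-- Vanishing of entries of a morphism: target segment born strictly later. -/
lemma P0 {a b a' b' : Fin r → ℕ} (ha1 : ∀ k, 1 ≤ a k)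
    (u : ∀ i : Fin n, (segType n r a b i → ℂ) →ₗ[ℂ] (segType n r a' b' i → ℂ))
    (hcom : ∀ h : (Atype n).Ω,
      (u ((Atype n).t h)).comp (Matrix.mulVecLin (segRep n r a b h))
        = (Matrix.mulVecLin (segRep n r a' b' h)).comp (u ((Atype n).s h))) :
    ∀ (m : ℕ) (hm : m < n) (j : segType n r a' b' ⟨m, hm⟩) (k : segType n r a b ⟨m, hm⟩),
      a k.1 < a' j.1 → u ⟨m, hm⟩ (Pi.single k 1) j = 0 := by
  intro m
  induction m with
  | zero =>
    intro hm j k hlt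
    have h1 : a' j.1 ≤ 0 + 1 := j.2.1
    have h2 := ha1 k.1
    omega
  | succ m ih =>
    intro hm j k hlt
    have hm' : m < n - 1 := by omega
    have hj1 : a' j.1 ≤ m + 2 := j.2.1
    have hk2 : m + 2 ≤ b k.1 := k.2.2
    have hks : a k.1 ≤ m + 1 ∧ m + 1 ≤ b k.1 := by omega
    have hcond : a k.1 ≤ m + 2 ∧ m + 2 ≤ b k.1 := k.2
    have HR := relE u hcom ⟨m, hm'⟩
      (⟨k.1, hks⟩ : segType n r a b ((Atype n).s ⟨m, hm'⟩)) j
    rw [dif_pos hcond] at HR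
    refine Eq.trans (HR : u ⟨m + 1, hm⟩ (Pi.single k 1) j = _) ?_
    split_ifs with hj
    · exact ih (by omega) ⟨j.1, hj⟩ ⟨k.1, hks⟩ hlt
    · rfl

/-- Vanishing of entries of a morphism: source segment dies strictly earlier. -/
lemma Q0 {a b a' b' : Fin r → ℕ} (hb'n : ∀ k, b' k ≤ n)
    (u : ∀ i : Fin n, (segType n r a b i → ℂ) →ₗ[ℂ] (segType n r a' b' i → ℂ))
    (hcom : ∀ h : (Atype n).Ω,
      (u ((Atype n).t h)).comp (Matrix.mulVecLin (segRep n r a b h))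
        = (Matrix.mulVecLin (segRep n r a' b' h)).comp (u ((Atype n).s h))) :
    ∀ (d m : ℕ) (hm : m < n), n - 1 - m = d →
      ∀ (j : segType n r a' b' ⟨m, hm⟩) (k : segType n r a b ⟨m, hm⟩),
        b k.1 < b' j.1 → u ⟨m, hm⟩ (Pi.single k 1) j = 0 := by
  intro d
  induction d with
  | zero =>
    intro m hm hd j k hlt
    have h1 : m + 1 ≤ b k.1 := k.2.2
    have h2 := hb'n j.1
    omega
  | succ d ih =>
    intro m hm hd j k hlt
    have h1 : m + 1 ≤ b k.1 := k.2.2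
    have h2 := hb'n j.1
    have hja : a' j.1 ≤ m + 1 := j.2.1
    have hm1 : m + 1 < n := by omega
    have hm' : m < n - 1 := by omega
    have hjt : a' j.1 ≤ m + 2 ∧ m + 2 ≤ b' j.1 := by omega
    have HR := relE u hcom ⟨m, hm'⟩ k
      (⟨j.1, hjt⟩ : segType n r a' b' ((Atype n).t ⟨m, hm'⟩))
    have hjs : a' j.1 ≤ m + 1 ∧ m + 1 ≤ b' j.1 := j.2
    rw [dif_pos hjs] at HR
    refine Eq.trans (HR.symm : u ⟨m, hm⟩ (Pi.single k 1) j = _) ?_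
    split_ifs with hk
    · exact ih (m + 1) hm1 (by omega) ⟨j.1, hjt⟩ ⟨k.1, hk⟩ hlt
    · rfl

end Statement16Aux

section ActOrbitAux

variable {Q : QuivData} {nn : Q.I → Type} [∀ i, Fintype (nn i)] [∀ i, DecidableEq (nn i)]

lemma act_act (g g' : ∀ i, GL (nn i) ℂ) (x : Q.RepSpace nn) :
    act g (act g' x) = act (fun i => g i * g' i) x := by
  funext h
  simp only [act, _root_.mul_inv_rev, Units.val_mul, Matrix.mul_assoc]

lemma orbit_eq_of_act {g : ∀ i, GL (nn i) ℂ} {x y : Q.RepSpace nn} (hg : act g x = y) :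
    orbit x = orbit y := by
  ext w
  constructor
  · rintro ⟨g', rfl⟩
    refine ⟨fun i => g' i * (g i)⁻¹, ?_⟩
    rw [← hg]
    rw [act_act]
    simp [inv_mul_cancel_right]
  · rintro ⟨g', rfl⟩
    exact ⟨fun i => g' i * g i, by rw [← hg, act_act]⟩

end ActOrbitAux

section GlOfAux

/-- The invertible matrix attached to a linear automorphism of `κ → ℂ`. -/
def glOf {κ : Type} [Fintype κ] [DecidableEq κ] (e : (κ → ℂ) ≃ₗ[ℂ] (κ → ℂ)) :
    GL κ ℂ where
  val := LinearMap.toMatrix' (e : (κ → ℂ) →ₗ[ℂ] (κ → ℂ))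
  inv := LinearMap.toMatrix' (e.symm : (κ → ℂ) →ₗ[ℂ] (κ → ℂ))
  val_inv := by
    rw [← LinearMap.toMatrix'_comp]
    have he : (e : (κ → ℂ) →ₗ[ℂ] (κ → ℂ)).comp (e.symm : (κ → ℂ) →ₗ[ℂ] (κ → ℂ))
        = LinearMap.id := by
      ext x
      simp
    rw [he, LinearMap.toMatrix'_id]
  inv_val := by
    rw [← LinearMap.toMatrix'_comp]
    have he : (e.symm : (κ → ℂ) →ₗ[ℂ] (κ → ℂ)).comp (e : (κ → ℂ) →ₗ[ℂ] (κ → ℂ))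
        = LinearMap.id := by
      ext x
      simp
    rw [he, LinearMap.toMatrix'_id]

lemma mulVecLin_glOf {κ : Type} [Fintype κ] [DecidableEq κ] (e : (κ → ℂ) ≃ₗ[ℂ] (κ → ℂ)) :
    Matrix.mulVecLin ((glOf e : Matrix κ κ ℂ)) = (e : (κ → ℂ) →ₗ[ℂ] (κ → ℂ)) := by
  rw [← Matrix.toLin'_apply']
  exact Matrix.toLin'_toMatrix' _

end GlOfAux

section MainAux

open Matrix

variable {n r : ℕ} (a b t : Fin r → ℕ)

/-- Inclusion of the `ν`-indices into the `λ`-indices. -/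
def nuToLam (hat : ∀ k, a k ≤ t k) (i : Fin n) (j : segType n r (fun k => t k + 1) b i) :
    segType n r a b i :=
  ⟨j.1, ⟨by have h1 : t j.1 + 1 ≤ i.1 + 1 := j.2.1; have := hat j.1; omega, j.2.2⟩⟩

/-- Inclusion of the `μ`-indices into the `λ`-indices. -/
def muToLam (i : Fin n) (j : segType n r a (fun k => min (t k) (b k)) i) :
    segType n r a b i :=
  ⟨j.1, ⟨j.2.1, by have h1 : i.1 + 1 ≤ min (t j.1) (b j.1) := j.2.2; omega⟩⟩

/-- Extension by zero from the `ν`-coordinates. -/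
def extNu (i : Fin n) :
    (segType n r (fun k => t k + 1) b i → ℂ) →ₗ[ℂ] (segType n r a b i → ℂ) where
  toFun c := fun k =>
    if hk : t k.1 + 1 ≤ i.1 + 1 ∧ i.1 + 1 ≤ b k.1 then c ⟨k.1, hk⟩ else 0
  map_add' c d := by
    funext k
    by_cases hk : t k.1 + 1 ≤ i.1 + 1 ∧ i.1 + 1 ≤ b k.1
    · simp only [Pi.add_apply, dif_pos hk]; rfl
    · simp only [Pi.add_apply, dif_neg hk, add_zero]
  map_smul' s c := by
    funext k
    by_cases hk : t k.1 + 1 ≤ i.1 + 1 ∧ i.1 + 1 ≤ b k.1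
    · simp only [Pi.smul_apply, dif_pos hk, RingHom.id_apply]; rfl
    · simp only [Pi.smul_apply, dif_neg hk, smul_zero, RingHom.id_apply]

@[simp] lemma extNu_apply (i : Fin n) (c : segType n r (fun k => t k + 1) b i → ℂ)
    (k : segType n r a b i) :
    extNu a b t i c k =
      if hk : t k.1 + 1 ≤ i.1 + 1 ∧ i.1 + 1 ≤ b k.1 then c ⟨k.1, hk⟩ else 0 := rfl

/-- Extension by zero from the `μ`-coordinates. -/
def extMu (i : Fin n) :
    (segType n r a (fun k => min (t k) (b k)) i → ℂ) →ₗ[ℂ] (segType n r a b i → ℂ) where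
  toFun c := fun k =>
    if hk : a k.1 ≤ i.1 + 1 ∧ i.1 + 1 ≤ min (t k.1) (b k.1) then c ⟨k.1, hk⟩ else 0
  map_add' c d := by
    funext k
    by_cases hk : a k.1 ≤ i.1 + 1 ∧ i.1 + 1 ≤ min (t k.1) (b k.1)
    · simp only [Pi.add_apply, dif_pos hk]; rfl
    · simp only [Pi.add_apply, dif_neg hk, add_zero]
  map_smul' s c := by
    funext k
    by_cases hk : a k.1 ≤ i.1 + 1 ∧ i.1 + 1 ≤ min (t k.1) (b k.1)
    · simp only [Pi.smul_apply, dif_pos hk, RingHom.id_apply]; rfl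
    · simp only [Pi.smul_apply, dif_neg hk, smul_zero, RingHom.id_apply]

@[simp] lemma extMu_apply (i : Fin n) (c : segType n r a (fun k => min (t k) (b k)) i → ℂ)
    (k : segType n r a b i) :
    extMu a b t i c k =
      if hk : a k.1 ≤ i.1 + 1 ∧ i.1 + 1 ≤ min (t k.1) (b k.1) then c ⟨k.1, hk⟩ else 0 := rfl

/-- Restriction to the `ν`-coordinates. -/
def resNu (hat : ∀ k, a k ≤ t k) (i : Fin n) :
    (segType n r a b i → ℂ) →ₗ[ℂ] (segType n r (fun k => t k + 1) b i → ℂ) :=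
  LinearMap.funLeft ℂ ℂ (nuToLam a b t hat i)

@[simp] lemma resNu_apply (hat : ∀ k, a k ≤ t k) (i : Fin n)
    (x : segType n r a b i → ℂ) (j : segType n r (fun k => t k + 1) b i) :
    resNu a b t hat i x j = x (nuToLam a b t hat i j) := rfl

/-- Restriction to the `μ`-coordinates. -/
def resMu (i : Fin n) :
    (segType n r a b i → ℂ) →ₗ[ℂ] (segType n r a (fun k => min (t k) (b k)) i → ℂ) :=
  LinearMap.funLeft ℂ ℂ (muToLam a b t i)

@[simp] lemma resMu_apply (i : Fin n)
    (x : segType n r a b i → ℂ) (j : segType n r a (fun k => min (t k) (b k)) i) :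
    resMu a b t i x j = x (muToLam a b t i j) := rfl

/-- The subspace spanned by the `ν`-coordinates. -/
def Wnu (i : Fin n) : Submodule ℂ (segType n r a b i → ℂ) where
  carrier := {x | ∀ k : segType n r a b i, i.1 + 1 ≤ t k.1 → x k = 0}
  add_mem' := by
    intro x y hx hy k hk
    simp only [Pi.add_apply, hx k hk, hy k hk, add_zero]
  zero_mem' := by intro k _; rfl
  smul_mem' := by
    intro c x hx k hk
    simp only [Pi.smul_apply, hx k hk, smul_zero]

lemma mem_Wnu {i : Fin n} {x : segType n r a b i → ℂ} :
    x ∈ Wnu a b t i ↔ ∀ k : segType n r a b i, i.1 + 1 ≤ t k.1 → x k = 0 := Iff.rfl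

/-- `Wnu` is linearly equivalent to the space of `ν`-coordinates. -/
def equivWnu (hat : ∀ k, a k ≤ t k) (i : Fin n) :
    Wnu a b t i ≃ₗ[ℂ] (segType n r (fun k => t k + 1) b i → ℂ) where
  toFun w := fun j => (w : segType n r a b i → ℂ) (nuToLam a b t hat i j)
  map_add' w w' := rfl
  map_smul' c w := rfl
  invFun x := ⟨fun k =>
      if hk : t k.1 + 1 ≤ i.1 + 1 ∧ i.1 + 1 ≤ b k.1 then x ⟨k.1, hk⟩ else 0,
    by intro k hk; exact dif_neg (by omega)⟩
  left_inv w := by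
    apply Subtype.ext
    funext k
    show (if hk : t k.1 + 1 ≤ i.1 + 1 ∧ i.1 + 1 ≤ b k.1 then
        (w : segType n r a b i → ℂ) (nuToLam a b t hat i ⟨k.1, hk⟩) else 0)
      = (w : segType n r a b i → ℂ) k
    by_cases hk : t k.1 + 1 ≤ i.1 + 1 ∧ i.1 + 1 ≤ b k.1
    · rw [dif_pos hk]
      rfl
    · rw [dif_neg hk]
      have h2 : i.1 + 1 ≤ b k.1 := k.2.2
      exact (w.2 k (by omega)).symm
  right_inv x := by
    funext j
    have hj : t j.1 + 1 ≤ i.1 + 1 ∧ i.1 + 1 ≤ b j.1 := j.2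
    show (if hj' : t j.1 + 1 ≤ i.1 + 1 ∧ i.1 + 1 ≤ b j.1 then x ⟨j.1, hj'⟩ else 0) = x j
    rw [dif_pos hj]
    rfl

lemma finrank_Wnu (hat : ∀ k, a k ≤ t k) (i : Fin n) :
    Module.finrank ℂ (Wnu a b t i)
      = Fintype.card (segType n r (fun k => t k + 1) b i) := by
  rw [(equivWnu a b t hat i).finrank_eq]
  exact Module.finrank_pi ℂ

lemma card_split (hat : ∀ k, a k ≤ t k) (i : Fin n) :
    Fintype.card (segType n r a b i)
      = Fintype.card (segType n r a (fun k => min (t k) (b k)) i)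
        + Fintype.card (segType n r (fun k => t k + 1) b i) := by
  classical
  rw [← Fintype.card_sum]
  apply Fintype.card_congr
  refine ⟨fun k => if hk : i.1 + 1 ≤ t k.1 then
      Sum.inl ⟨k.1, ⟨k.2.1, by
        have h2 : i.1 + 1 ≤ b k.1 := k.2.2
        show i.1 + 1 ≤ min (t k.1) (b k.1)
        omega⟩⟩
    else Sum.inr ⟨k.1, ⟨by show t k.1 + 1 ≤ i.1 + 1; omega, k.2.2⟩⟩,
    fun j => Sum.rec
      (fun j => ⟨j.1, ⟨j.2.1, by have h2 : i.1 + 1 ≤ min (t j.1) (b j.1) := j.2.2; omega⟩⟩)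
      (fun j => ⟨j.1, ⟨by
        have h1 : t j.1 + 1 ≤ i.1 + 1 := j.2.1
        have := hat j.1
        omega, j.2.2⟩⟩) j,
    ?_, ?_⟩
  · intro k
    by_cases hk : i.1 + 1 ≤ t k.1
    · simp only [dif_pos hk]
      rfl
    · simp only [dif_neg hk]
      rfl
  · intro j
    rcases j with j | j
    · have hj : i.1 + 1 ≤ t j.1 := by
        have h2 : i.1 + 1 ≤ min (t j.1) (b j.1) := j.2.2; omega
      simp only [dif_pos hj]
      rfl
    · have hj : ¬ i.1 + 1 ≤ t j.1 := by
        have h1 : t j.1 + 1 ≤ i.1 + 1 := j.2.1; omega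
      simp only [dif_neg hj]
      rfl

/-- Decomposition of a vector in the standard basis. -/
lemma pi_decomp {ι : Type} [Fintype ι] [DecidableEq ι] (x : ι → ℂ) :
    x = ∑ j, (x j) • (Pi.single j (1 : ℂ) : ι → ℂ) := by
  funext k
  rw [Finset.sum_apply]
  symm
  refine (Finset.sum_eq_single k ?_ ?_).trans ?_
  · intro j _ hne
    have hz : (Pi.single j (1 : ℂ) : ι → ℂ) k = 0 := Pi.single_eq_of_ne (Ne.symm hne) 1
    simp [hz]
  · intro hk; exact absurd (Finset.mem_univ _) hk
  · simp

lemma lmap_mem_of_single {ι : Type} [Fintype ι] [DecidableEq ι] {V : Type}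
    [AddCommGroup V] [Module ℂ V]
    (φ : (ι → ℂ) →ₗ[ℂ] V) (p : Submodule ℂ V) (h : ∀ j, φ (Pi.single j 1) ∈ p)
    (x : ι → ℂ) : φ x ∈ p := by
  rw [pi_decomp x, map_sum]
  apply Submodule.sum_mem
  intro j _
  rw [_root_.map_smul]
  exact Submodule.smul_mem _ _ (h j)

end MainAux

section KerAux

open Matrix

variable {n r : ℕ} (a b t : Fin r → ℕ)

lemma u_single_zero
    (hamono : ∀ k l : Fin r, k < l → a k < a l)
    (htmono : ∀ k l : Fin r, k < l → t k < t l)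
    (ha1 : ∀ k, 1 ≤ a k)
    (u : ∀ i : Fin n, (segType n r a b i → ℂ) →ₗ[ℂ]
      (segType n r a (fun k => min (t k) (b k)) i → ℂ))
    (hcom : ∀ h : (Atype n).Ω,
      (u ((Atype n).t h)).comp (Matrix.mulVecLin (segRep n r a b h))
        = (Matrix.mulVecLin (segRep n r a (fun k => min (t k) (b k)) h)).comp
            (u ((Atype n).s h)))
    (i : Fin n) (k : segType n r a b i) (hk : t k.1 + 1 ≤ i.1 + 1) :
    u i (Pi.single k 1) = 0 := by
  funext j
  have hjm : i.1 + 1 ≤ min (t j.1) (b j.1) := j.2.2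
  have hkl : k.1 < j.1 := by
    by_contra hle
    push_neg at hle
    rcases lt_or_eq_of_le hle with hlt | heq
    · have := htmono _ _ hlt; omega
    · have ht : t j.1 = t k.1 := congrArg t heq
      omega
  have hlt : a k.1 < a j.1 := hamono _ _ hkl
  exact P0 ha1 u hcom i.1 i.2 j k hlt

lemma f_single_mem
    (hbmono : ∀ k l : Fin r, k < l → b k < b l)
    (htmono : ∀ k l : Fin r, k < l → t k < t l)
    (hbn : ∀ k, b k ≤ n)
    (f : ∀ i : Fin n, (segType n r (fun k => t k + 1) b i → ℂ) →ₗ[ℂ]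
      (segType n r a b i → ℂ))
    (hcom : ∀ h : (Atype n).Ω,
      (f ((Atype n).t h)).comp (Matrix.mulVecLin (segRep n r (fun k => t k + 1) b h))
        = (Matrix.mulVecLin (segRep n r a b h)).comp (f ((Atype n).s h)))
    (i : Fin n) (j : segType n r (fun k => t k + 1) b i) :
    f i (Pi.single j 1) ∈ Wnu a b t i := by
  intro k hk
  have hj1 : t j.1 + 1 ≤ i.1 + 1 := j.2.1
  have hjk : j.1 < k.1 := by
    by_contra hle
    push_neg at hle
    rcases lt_or_eq_of_le hle with hlt | heq
    · have := htmono _ _ hlt; omega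
    · have ht : t k.1 = t j.1 := congrArg t heq
      omega
  have hblt : b j.1 < b k.1 := hbmono _ _ hjk
  exact Q0 hbn f hcom (n - 1 - i.1) i.1 i.2 rfl k j hblt

lemma ker_eq_Wnu
    (hamono : ∀ k l : Fin r, k < l → a k < a l)
    (htmono : ∀ k l : Fin r, k < l → t k < t l)
    (ha1 : ∀ k, 1 ≤ a k) (hat : ∀ k, a k ≤ t k)
    (u : ∀ i : Fin n, (segType n r a b i → ℂ) →ₗ[ℂ]
      (segType n r a (fun k => min (t k) (b k)) i → ℂ))
    (hcom : ∀ h : (Atype n).Ω,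
      (u ((Atype n).t h)).comp (Matrix.mulVecLin (segRep n r a b h))
        = (Matrix.mulVecLin (segRep n r a (fun k => min (t k) (b k)) h)).comp
            (u ((Atype n).s h)))
    (hsurj : ∀ i, Function.Surjective (u i)) (i : Fin n) :
    LinearMap.ker (u i) = Wnu a b t i := by
  symm
  apply Submodule.eq_of_le_of_finrank_le
  · intro x hx
    rw [LinearMap.mem_ker]
    rw [pi_decomp x, map_sum]
    apply Finset.sum_eq_zero
    intro k _
    rw [_root_.map_smul]
    by_cases hk : t k.1 + 1 ≤ i.1 + 1
    · rw [u_single_zero a b t hamono htmono ha1 u hcom i k hk, smul_zero]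
    · have hxk : x k = 0 := hx k (by omega)
      rw [hxk, zero_smul]
  · have h1 := LinearMap.finrank_range_add_finrank_ker (u i)
    have h2 : LinearMap.range (u i) = ⊤ := LinearMap.range_eq_top.mpr (hsurj i)
    rw [h2, finrank_top, Module.finrank_pi, Module.finrank_pi] at h1
    rw [finrank_Wnu a b t hat i]
    have h3 := card_split a b t hat i
    omega

lemma range_eq_Wnu
    (hbmono : ∀ k l : Fin r, k < l → b k < b l)
    (htmono : ∀ k l : Fin r, k < l → t k < t l)
    (hbn : ∀ k, b k ≤ n) (hat : ∀ k, a k ≤ t k)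
    (f : ∀ i : Fin n, (segType n r (fun k => t k + 1) b i → ℂ) →ₗ[ℂ]
      (segType n r a b i → ℂ))
    (hcom : ∀ h : (Atype n).Ω,
      (f ((Atype n).t h)).comp (Matrix.mulVecLin (segRep n r (fun k => t k + 1) b h))
        = (Matrix.mulVecLin (segRep n r a b h)).comp (f ((Atype n).s h)))
    (hinj : ∀ i, Function.Injective (f i)) (i : Fin n) :
    LinearMap.range (f i) = Wnu a b t i := by
  apply Submodule.eq_of_le_of_finrank_le
  · rintro y ⟨x, rfl⟩
    exact lmap_mem_of_single (f i) _
      (fun j => f_single_mem a b t hbmono htmono hbn f hcom i j) x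
  · rw [finrank_Wnu a b t hat i]
    have h1 := LinearMap.finrank_range_add_finrank_ker (f i)
    have h2 : LinearMap.ker (f i) = ⊥ := LinearMap.ker_eq_bot.mpr (hinj i)
    rw [h2, finrank_bot, Module.finrank_pi] at h1
    omega

end KerAux

section MkVal

variable {n r : ℕ}

@[simp] lemma Atype_s_val (h : (Atype n).Ω) : ((Atype n).s h).1 = h.1 := rfl

@[simp] lemma Atype_t_val (h : (Atype n).Ω) : ((Atype n).t h).1 = h.1 + 1 := rfl

@[simp] lemma seg_mk_val (a b : Fin r → ℕ) (i : (Atype n).I) (kv : Fin r)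
    (hk : a kv ≤ i.1 + 1 ∧ i.1 + 1 ≤ b kv) :
    ((⟨kv, hk⟩ : segType n r a b i)).1 = kv := rfl

@[simp] lemma nuToLam_val (a b t : Fin r → ℕ) (hat : ∀ k, a k ≤ t k) (i : Fin n)
    (j : segType n r (fun k => t k + 1) b i) :
    (nuToLam a b t hat i j).1 = j.1 := rfl

@[simp] lemma muToLam_val (a b t : Fin r → ℕ) (i : Fin n)
    (j : segType n r a (fun k => min (t k) (b k)) i) :
    (muToLam a b t i j).1 = j.1 := rfl

lemma extNu_apply' (a b t : Fin r → ℕ) (i : (Atype n).I)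
    (c : segType n r (fun k => t k + 1) b i → ℂ) (k : segType n r a b i) :
    extNu a b t i c k =
      if hk : t k.1 + 1 ≤ i.1 + 1 ∧ i.1 + 1 ≤ b k.1 then c ⟨k.1, hk⟩ else 0 := rfl

lemma extMu_apply' (a b t : Fin r → ℕ) (i : (Atype n).I)
    (c : segType n r a (fun k => min (t k) (b k)) i → ℂ) (k : segType n r a b i) :
    extMu a b t i c k =
      if hk : a k.1 ≤ i.1 + 1 ∧ i.1 + 1 ≤ min (t k.1) (b k.1) then c ⟨k.1, hk⟩ else 0 := rfl

lemma resMu_apply' (a b t : Fin r → ℕ) (i : (Atype n).I)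
    (x : segType n r a b i → ℂ) (j : segType n r a (fun k => min (t k) (b k)) i) :
    resMu a b t i x j = x (muToLam a b t i j) := rfl

lemma muToLam_val' (a b t : Fin r → ℕ) (i : (Atype n).I)
    (j : segType n r a (fun k => min (t k) (b k)) i) :
    (muToLam a b t i j).1 = j.1 := rfl

lemma extNu_apply_mk (a b t : Fin r → ℕ) (i : (Atype n).I)
    (c : segType n r (fun k => t k + 1) b i → ℂ) (kv : Fin r)
    (hkv : a kv ≤ i.1 + 1 ∧ i.1 + 1 ≤ b kv) :
    extNu a b t i c ⟨kv, hkv⟩ =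
      if hk : t kv + 1 ≤ i.1 + 1 ∧ i.1 + 1 ≤ b kv then c ⟨kv, hk⟩ else 0 := rfl

lemma extMu_apply_mk (a b t : Fin r → ℕ) (i : (Atype n).I)
    (c : segType n r a (fun k => min (t k) (b k)) i → ℂ) (kv : Fin r)
    (hkv : a kv ≤ i.1 + 1 ∧ i.1 + 1 ≤ b kv) :
    extMu a b t i c ⟨kv, hkv⟩ =
      if hk : a kv ≤ i.1 + 1 ∧ i.1 + 1 ≤ min (t kv) (b kv) then c ⟨kv, hk⟩ else 0 := rfl

lemma resMu_apply_mk (a b t : Fin r → ℕ) (i : (Atype n).I)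
    (x : segType n r a b i → ℂ) (kv : Fin r)
    (hkv : a kv ≤ i.1 + 1 ∧ i.1 + 1 ≤ min (t kv) (b kv)) :
    resMu a b t i x ⟨kv, hkv⟩ = x (muToLam a b t i ⟨kv, hkv⟩) := rfl

lemma seg_mulVec_apply_mk (a b : Fin r → ℕ) (h : (Atype n).Ω)
    (x : segType n r a b ((Atype n).s h) → ℂ) (kv : Fin r)
    (hkv : a kv ≤ ((Atype n).t h).1 + 1 ∧ ((Atype n).t h).1 + 1 ≤ b kv) :
    Matrix.mulVecLin (segRep n r a b h) x ⟨kv, hkv⟩ =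
      if hs : a kv ≤ h.1 + 1 ∧ h.1 + 1 ≤ b kv then x ⟨kv, hs⟩ else 0 :=
  seg_mulVec_apply a b h x ⟨kv, hkv⟩

lemma extNu_apply_s (a b t : Fin r → ℕ) (h : (Atype n).Ω)
    (c : segType n r (fun k => t k + 1) b ((Atype n).s h) → ℂ) (kv : Fin r)
    (hkv : a kv ≤ h.1 + 1 ∧ h.1 + 1 ≤ b kv) :
    extNu a b t ((Atype n).s h) c ⟨kv, hkv⟩ =
      if hk : t kv + 1 ≤ h.1 + 1 ∧ h.1 + 1 ≤ b kv then c ⟨kv, hk⟩ else 0 := rfl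

lemma extMu_apply_s (a b t : Fin r → ℕ) (h : (Atype n).Ω)
    (c : segType n r a (fun k => min (t k) (b k)) ((Atype n).s h) → ℂ) (kv : Fin r)
    (hkv : a kv ≤ h.1 + 1 ∧ h.1 + 1 ≤ b kv) :
    extMu a b t ((Atype n).s h) c ⟨kv, hkv⟩ =
      if hk : a kv ≤ h.1 + 1 ∧ h.1 + 1 ≤ min (t kv) (b kv) then c ⟨kv, hk⟩ else 0 := rfl

lemma resMu_apply_s (a b t : Fin r → ℕ) (h : (Atype n).Ω)
    (x : segType n r a b ((Atype n).s h) → ℂ) (kv : Fin r)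
    (hkv : a kv ≤ h.1 + 1 ∧ h.1 + 1 ≤ min (t kv) (b kv)) :
    resMu a b t ((Atype n).s h) x ⟨kv, hkv⟩ =
      x ⟨kv, ⟨hkv.1, le_trans hkv.2 (min_le_right _ _)⟩⟩ := rfl

end MkVal

/-- Let `λ = Σ_{i=1}^r [a_i, b_i]` be a multisegment with `a_1 < ⋯ < a_r` and
`b_1 < ⋯ < b_r`, and let `t_1 < ⋯ < t_r` be integers with `a_i ≤ t_i ≤ b_i + 1`.  Put
`μ = Σ_i [a_i, t_i]` and `ν = Σ_i [t_i + 1, b_i]` (empty segments omitted; when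
`t_i = b_i + 1` the `μ`-segment is `[a_i, b_i]`, realized below by the bound
`min (t_i) (b_i)`).  Then `(μ, ν)` is a generic pair of `λ`. -/
theorem statement16 (n r : ℕ) (a b t : Fin r → ℕ)
    (ha1 : ∀ k, 1 ≤ a k) (hab : ∀ k, a k ≤ b k) (hbn : ∀ k, b k ≤ n)
    (hamono : ∀ k l : Fin r, k < l → a k < a l)
    (hbmono : ∀ k l : Fin r, k < l → b k < b l)
    (htmono : ∀ k l : Fin r, k < l → t k < t l)
    (hat : ∀ k, a k ≤ t k) (htb : ∀ k, t k ≤ b k + 1) :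
    GenericPair (segRep n r a b)
      (segRep n r a (fun k => min (t k) (b k)))
      (segRep n r (fun k => t k + 1) b) := by
  classical
  refine ⟨?_, ?_, ?_⟩
  · -- the standard short exact sequence
    refine ⟨fun i => extNu a b t i, fun i => resMu a b t i, ?_, ?_, ?_, ?_, ?_⟩
    · intro i
      have hli : ∀ c, resNu a b t hat i (extNu a b t i c) = c := by
        intro c
        funext j
        erw [resNu_apply, extNu_apply,
          dif_pos (show t (nuToLam a b t hat i j).1 + 1 ≤ i.1 + 1 ∧
            i.1 + 1 ≤ b (nuToLam a b t hat i j).1 from j.2)]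
        rfl
      intro x y hxy
      have h2 := congrArg (resNu a b t hat i) hxy
      rwa [hli, hli] at h2
    · intro i
      apply LinearMap.funLeft_surjective_of_injective
      intro j j' he
      have hv : (muToLam a b t i j).1 = (muToLam a b t i j').1 := congrArg Subtype.val he
      exact Subtype.ext hv
    · intro i
      ext x
      rw [LinearMap.mem_ker, LinearMap.mem_range]
      constructor
      · intro hx
        refine ⟨fun j => x (nuToLam a b t hat i j), ?_⟩
        funext k
        erw [extNu_apply]
        by_cases hk : t k.1 + 1 ≤ i.1 + 1 ∧ i.1 + 1 ≤ b k.1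
        · rw [dif_pos hk]
          rfl
        · rw [dif_neg hk]
          have h2 : i.1 + 1 ≤ b k.1 := k.2.2
          have hxk := congrFun hx (⟨k.1, ⟨k.2.1, by
            show i.1 + 1 ≤ min (t k.1) (b k.1); omega⟩⟩ :
            segType n r a (fun k => min (t k) (b k)) i)
          exact hxk.symm
      · rintro ⟨c, rfl⟩
        funext j
        erw [resMu_apply, extNu_apply,
          dif_neg (show ¬(t (muToLam a b t i j).1 + 1 ≤ i.1 + 1 ∧
            i.1 + 1 ≤ b (muToLam a b t i j).1) from by
              have h2 : i.1 + 1 ≤ min (t j.1) (b j.1) := j.2.2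
              show ¬(t j.1 + 1 ≤ i.1 + 1 ∧ i.1 + 1 ≤ b j.1)
              omega)]
        rfl
    · intro h
      apply LinearMap.ext
      intro c
      funext k
      have hk2 : a k.1 ≤ h.1 + 2 ∧ h.1 + 2 ≤ b k.1 := k.2
      have hha := hat k.1
      have hk21 := hk2.1
      have hk22 := hk2.2
      show Matrix.mulVecLin (segRep n r a b h) (extNu a b t ((Atype n).s h) c) k
          = extNu a b t ((Atype n).t h)
              (Matrix.mulVecLin (segRep n r (fun k => t k + 1) b h) c) k
      simp only [seg_mulVec_apply, seg_mulVec_apply_mk, extNu_apply, extNu_apply', extNu_apply_mk, extNu_apply_s]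
      have eAs : ((Atype n).s h).1 = h.1 := rfl
      have eAt : ((Atype n).t h).1 = h.1 + 1 := rfl
      split_ifs <;> first | rfl | omega
    · intro h
      apply LinearMap.ext
      intro x
      funext j
      have hj2 : a j.1 ≤ h.1 + 2 ∧ h.1 + 2 ≤ min (t j.1) (b j.1) := j.2
      have hj21 := hj2.1
      have hj22 := hj2.2
      show Matrix.mulVecLin (segRep n r a b h) x (muToLam a b t ((Atype n).t h) j)
          = Matrix.mulVecLin (segRep n r a (fun k => min (t k) (b k)) h)
              (resMu a b t ((Atype n).s h) x) j
      simp only [seg_mulVec_apply, seg_mulVec_apply_mk, resMu_apply, resMu_apply', resMu_apply_mk, resMu_apply_s]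
      have eAs : ((Atype n).s h).1 = h.1 := rfl
      have eMa : a (muToLam a b t ((Atype n).t h) j).1 = a j.1 := rfl
      have eMb : b (muToLam a b t ((Atype n).t h) j).1 = b j.1 := rfl
      have eAt : ((Atype n).t h).1 = h.1 + 1 := rfl
      split_ifs <;> first | rfl | omega
  · -- no smaller kernel
    rintro y' ⟨f, u, hfinj, husurj, hker, hfcom, hucom⟩ hKP
    apply hKP.2
    have hkerW : ∀ i, LinearMap.ker (u i) = Wnu a b t i :=
      fun i => ker_eq_Wnu a b t hamono htmono ha1 hat u hucom husurj i
    have hrangeW : ∀ i, LinearMap.range (f i) = Wnu a b t i :=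
      fun i => (hker i).symm.trans (hkerW i)
    set φ : ∀ i : Fin n, (segType n r (fun k => t k + 1) b i → ℂ) →ₗ[ℂ]
        (segType n r (fun k => t k + 1) b i → ℂ) :=
      fun i => (resNu a b t hat i).comp (f i) with hφ
    have hφinj : ∀ i, Function.Injective (φ i) := by
      intro i
      rw [injective_iff_map_eq_zero]
      intro x hx
      have hfx : f i x ∈ Wnu a b t i := by
        rw [← hrangeW i]; exact ⟨x, rfl⟩
      have hfx0 : f i x = 0 := by
        funext k
        by_cases hk : t k.1 + 1 ≤ i.1 + 1
        · exact congrFun hx ⟨k.1, ⟨hk, k.2.2⟩⟩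
        · exact hfx k (by omega)
      exact hfinj i (hfx0.trans (map_zero (f i)).symm)
    have hφsurj : ∀ i, Function.Surjective (φ i) :=
      fun i => LinearMap.injective_iff_surjective.mp (hφinj i)
    set e : ∀ i : Fin n, (segType n r (fun k => t k + 1) b i → ℂ) ≃ₗ[ℂ]
        (segType n r (fun k => t k + 1) b i → ℂ) :=
      fun i => LinearEquiv.ofBijective (φ i) ⟨hφinj i, hφsurj i⟩ with he
    set g : ∀ i : Fin n, GL (segType n r (fun k => t k + 1) b i) ℂ :=
      fun i => glOf (e i) with hg
    have hgv : ∀ i, Matrix.mulVecLin ((g i).val) = φ i :=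
      fun i => mulVecLin_glOf (e i)
    have key : ∀ h : (Atype n).Ω,
        (φ ((Atype n).t h)).comp (Matrix.mulVecLin (y' h))
          = (Matrix.mulVecLin (segRep n r (fun k => t k + 1) b h)).comp
              (φ ((Atype n).s h)) := by
      intro h
      apply LinearMap.ext
      intro x
      funext j
      have hstep : f ((Atype n).t h) (Matrix.mulVecLin (y' h) x)
          = Matrix.mulVecLin (segRep n r a b h) (f ((Atype n).s h) x) :=
        (LinearMap.congr_fun (hfcom h) x).symm
      have hj2 : t j.1 + 1 ≤ h.1 + 2 ∧ h.1 + 2 ≤ b j.1 := j.2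
      have hj21 := hj2.1
      have hj22 := hj2.2
      have hha := hat j.1
      show f ((Atype n).t h) (Matrix.mulVecLin (y' h) x)
            (nuToLam a b t hat ((Atype n).t h) j)
          = Matrix.mulVecLin (segRep n r (fun k => t k + 1) b h)
              (resNu a b t hat ((Atype n).s h) (f ((Atype n).s h) x)) j
      rw [hstep]
      rw [seg_mulVec_apply, seg_mulVec_apply]
      rw [dif_pos (show a (nuToLam a b t hat ((Atype n).t h) j).1 ≤ h.1 + 1 ∧
        h.1 + 1 ≤ b (nuToLam a b t hat ((Atype n).t h) j).1 from
          ⟨by show a j.1 ≤ h.1 + 1; omega, by show h.1 + 1 ≤ b j.1; omega⟩)]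
      by_cases hν : t j.1 + 1 ≤ h.1 + 1
      · rw [dif_pos (show (fun k => t k + 1) j.1 ≤ h.1 + 1 ∧ h.1 + 1 ≤ b j.1 from
          ⟨by show t j.1 + 1 ≤ h.1 + 1; omega, by omega⟩)]
        rfl
      · rw [dif_neg (show ¬((fun k => t k + 1) j.1 ≤ h.1 + 1 ∧ h.1 + 1 ≤ b j.1) from by
          show ¬(t j.1 + 1 ≤ h.1 + 1 ∧ h.1 + 1 ≤ b j.1); omega)]
        have hmem : f ((Atype n).s h) x ∈ Wnu a b t ((Atype n).s h) := by
          rw [← hrangeW]; exact ⟨x, rfl⟩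
        exact hmem _ (by show h.1 + 1 ≤ t j.1; omega)
    have hact : act g y' = segRep n r (fun k => t k + 1) b := by
      funext h
      have hmat : ((g ((Atype n).t h)).val) * y' h
          = segRep n r (fun k => t k + 1) b h * (g ((Atype n).s h)).val := by
        apply Matrix.toLin'.injective
        rw [Matrix.toLin'_apply', Matrix.toLin'_apply', Matrix.mulVecLin_mul,
          Matrix.mulVecLin_mul]
        erw [hgv, hgv, key]
      show ((g ((Atype n).t h)).val) * y' h
            * (((g ((Atype n).s h))⁻¹ : GL (segType n r (fun k => t k + 1) b ((Atype n).s h)) ℂ)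
              ).val
          = segRep n r (fun k => t k + 1) b h
      rw [hmat, Matrix.mul_assoc, ← Units.val_mul, mul_inv_cancel, Units.val_one,
        Matrix.mul_one]
    exact orbit_eq_of_act hact
  · -- no smaller quotient
    rintro z' ⟨f, u, hfinj, husurj, hker, hfcom, hucom⟩ hKP
    apply hKP.2
    have hcomf : ∀ h : (Atype n).Ω,
        (f ((Atype n).t h)).comp (Matrix.mulVecLin (segRep n r (fun k => t k + 1) b h))
          = (Matrix.mulVecLin (segRep n r a b h)).comp (f ((Atype n).s h)) :=
      fun h => (hfcom h).symm
    have hrangeW : ∀ i, LinearMap.range (f i) = Wnu a b t i :=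
      fun i => range_eq_Wnu a b t hbmono htmono hbn hat f hcomf hfinj i
    have hkerW : ∀ i, LinearMap.ker (u i) = Wnu a b t i :=
      fun i => (hker i).trans (hrangeW i)
    set ψ : ∀ i : Fin n, (segType n r a (fun k => min (t k) (b k)) i → ℂ) →ₗ[ℂ]
        (segType n r a (fun k => min (t k) (b k)) i → ℂ) :=
      fun i => (u i).comp (extMu a b t i) with hψ
    have hψinj : ∀ i, Function.Injective (ψ i) := by
      intro i
      rw [injective_iff_map_eq_zero]
      intro c hc
      have hmem : extMu a b t i c ∈ Wnu a b t i := by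
        rw [← hkerW i]
        exact hc
      funext j
      have hj2 : i.1 + 1 ≤ min (t j.1) (b j.1) := j.2.2
      have hW := hmem (muToLam a b t i j) (by show i.1 + 1 ≤ t j.1; omega)
      rw [extMu_apply, dif_pos (show a (muToLam a b t i j).1 ≤ i.1 + 1 ∧
        i.1 + 1 ≤ min (t (muToLam a b t i j).1) (b (muToLam a b t i j).1) from j.2)] at hW
      exact hW
    have hψsurj : ∀ i, Function.Surjective (ψ i) :=
      fun i => LinearMap.injective_iff_surjective.mp (hψinj i)
    set e : ∀ i : Fin n, (segType n r a (fun k => min (t k) (b k)) i → ℂ) ≃ₗ[ℂ]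
        (segType n r a (fun k => min (t k) (b k)) i → ℂ) :=
      fun i => LinearEquiv.ofBijective (ψ i) ⟨hψinj i, hψsurj i⟩ with he
    set g : ∀ i : Fin n, GL (segType n r a (fun k => min (t k) (b k)) i) ℂ :=
      fun i => glOf (e i) with hg
    have hgv : ∀ i, Matrix.mulVecLin ((g i).val) = ψ i :=
      fun i => mulVecLin_glOf (e i)
    have key : ∀ h : (Atype n).Ω,
        (ψ ((Atype n).t h)).comp
            (Matrix.mulVecLin (segRep n r a (fun k => min (t k) (b k)) h))
          = (Matrix.mulVecLin (z' h)).comp (ψ ((Atype n).s h)) := by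
      intro h
      apply LinearMap.ext
      intro c
      have hstep : Matrix.mulVecLin (z' h) (u ((Atype n).s h) (extMu a b t ((Atype n).s h) c))
          = u ((Atype n).t h)
              (Matrix.mulVecLin (segRep n r a b h) (extMu a b t ((Atype n).s h) c)) :=
        (LinearMap.congr_fun (hucom h) (extMu a b t ((Atype n).s h) c)).symm
      show u ((Atype n).t h) (extMu a b t ((Atype n).t h)
            (Matrix.mulVecLin (segRep n r a (fun k => min (t k) (b k)) h) c))
          = Matrix.mulVecLin (z' h) (u ((Atype n).s h) (extMu a b t ((Atype n).s h) c))
      rw [hstep]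
      have hdiff : extMu a b t ((Atype n).t h)
            (Matrix.mulVecLin (segRep n r a (fun k => min (t k) (b k)) h) c)
          - Matrix.mulVecLin (segRep n r a b h) (extMu a b t ((Atype n).s h) c)
          ∈ LinearMap.ker (u ((Atype n).t h)) := by
        rw [hkerW]
        intro k hk
        have hk' : h.1 + 2 ≤ t k.1 := hk
        have hk2 : a k.1 ≤ h.1 + 2 ∧ h.1 + 2 ≤ b k.1 := k.2
        have hk21 := hk2.1
        have hk22 := hk2.2
        have hha := hat k.1
        have htbk := htb k.1
        rw [Pi.sub_apply]
        rw [sub_eq_zero]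
        simp only [seg_mulVec_apply, seg_mulVec_apply_mk, extMu_apply, extMu_apply', extMu_apply_mk, extMu_apply_s]
        have eAs : ((Atype n).s h).1 = h.1 := rfl
        have eAt : ((Atype n).t h).1 = h.1 + 1 := rfl
        split_ifs <;> first | rfl | omega
      have := (LinearMap.sub_mem_ker_iff).mp hdiff
      exact this
    have hact : act g (segRep n r a (fun k => min (t k) (b k))) = z' := by
      funext h
      have hmat : ((g ((Atype n).t h)).val)
            * segRep n r a (fun k => min (t k) (b k)) h
          = z' h * (g ((Atype n).s h)).val := by
        apply Matrix.toLin'.injective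
        rw [Matrix.toLin'_apply', Matrix.toLin'_apply', Matrix.mulVecLin_mul,
          Matrix.mulVecLin_mul]
        erw [hgv, hgv, key]
      show ((g ((Atype n).t h)).val)
            * segRep n r a (fun k => min (t k) (b k)) h
            * (((g ((Atype n).s h))⁻¹
                : GL (segType n r a (fun k => min (t k) (b k)) ((Atype n).s h)) ℂ)
              ).val
          = z' h
      rw [hmat, Matrix.mul_assoc, ← Units.val_mul, mul_inv_cancel, Units.val_one,
        Matrix.mul_one]
    exact (orbit_eq_of_act hact).symm

end QuivData
end
end
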